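/- The matrix N(z) defined on ℂ \ [−2,2] as above satisfies N(z) = I + O(1/z) as z → ∞. -/

import Mathlib

open Real Complex Filter Asymptotics

/-- `(z²−4)^t` with branches `arg(z±2) ∈ (−π,π)`: `(z−2)^t (z+2)^t` (principal powers). -/
noncomputable def zsqSub4Pow (z t : ℂ) : ℂ := (z - 2) ^ t * (z + 2) ^ t

/-- `φ(w) = w + √(w²−1)`, analytic in `ℂ \ [−1,1]` with `φ(w) ~ 2w` at infinity, the
square root being `(w−1)^{1/2}(w+1)^{1/2}` with principal branches. -/
noncomputable def joukowski (w : ℂ) : ℂ :=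
  w + (w - 1) ^ ((1 : ℂ) / 2) * (w + 1) ^ ((1 : ℂ) / 2)

/-- The global parametrix `N(z)`. -/
noncomputable def Nmat (α : ℝ) (L : ℂ) (z : ℂ) : Matrix (Fin 2) (Fin 2) ℂ :=
  !![zsqSub4Pow z ((1 : ℂ) / 4 - (α : ℂ)) * joukowski (z / 2) ^ ((2 : ℂ) * (α : ℂ) - 1 / 2),
     -Complex.I * Complex.exp L * zsqSub4Pow z ((α : ℂ) - 3 / 4)
       * joukowski (z / 2) ^ ((1 : ℂ) / 2 - 2 * (α : ℂ));
     Complex.I * Complex.exp (-L) * zsqSub4Pow z ((1 : ℂ) / 4 - (α : ℂ))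
       * joukowski (z / 2) ^ ((2 : ℂ) * (α : ℂ) - 3 / 2),
     zsqSub4Pow z ((α : ℂ) - 3 / 4) * joukowski (z / 2) ^ ((3 : ℂ) / 2 - 2 * (α : ℂ))]

namespace NmatAux

lemma pos_of_div_pos {a b : ℝ} (hb : 0 < b) (h : 0 < a / b) : 0 < a := by
  have h2 := mul_pos h hb
  rwa [div_mul_cancel₀ a hb.ne'] at h2

lemma neg_of_div_neg {a b : ℝ} (hb : 0 < b) (h : a / b < 0) : a < 0 := by
  have h2 := mul_neg_of_neg_of_pos h hb
  rwa [div_mul_cancel₀ a hb.ne'] at h2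

lemma arg_pos_of_im_pos {w : ℂ} (h : 0 < w.im) : 0 < w.arg := by
  rcases (Complex.arg_nonneg_iff.2 h.le).lt_or_eq with h' | h'
  · exact h'
  · exact absurd (Complex.arg_eq_zero_iff.1 h'.symm).2 h.ne'

lemma im_pos_of_arg_pos {w : ℂ} (hre : 0 < w.re) (h : 0 < w.arg) : 0 < w.im := by
  rcases (Complex.arg_nonneg_iff.1 h.le).lt_or_eq with h' | h'
  · exact h'
  · exact absurd (Complex.arg_eq_zero_iff.2 ⟨hre.le, h'.symm⟩) h.ne'

lemma log_mul_aux {u v : ℂ} (hu : u ≠ 0) (hv : 0 < v.re)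
    (h1 : 0 ≤ u.im → 0 < v.im → 0 < (u * v).im)
    (h2 : u.im ≤ 0 → v.im < 0 → (u * v).im < 0) :
    Complex.log (u * v) = Complex.log u + Complex.log v := by
  have hπ := Real.pi_pos
  have hv0 : v ≠ 0 := fun h => by simp [h] at hv
  have hva := abs_lt.1 (Complex.abs_arg_lt_pi_div_two_iff.2 (Or.inl hv))
  rw [Complex.log_mul_eq_add_log_iff hu hv0]
  have hu1 : -π < u.arg := Complex.neg_pi_lt_arg u
  have hu2 : u.arg ≤ π := Complex.arg_le_pi u
  have hcong := Complex.arg_mul_coe_angle hu hv0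
  rw [← Real.Angle.coe_add, Real.Angle.angle_eq_iff_two_pi_dvd_sub] at hcong
  obtain ⟨k, hk⟩ := hcong
  constructor
  · by_contra hc
    push_neg at hc
    have hva2 : v.arg < 0 := by linarith
    have hvim : v.im < 0 := by
      by_contra h
      push_neg at h
      exact absurd (Complex.arg_nonneg_iff.2 h) (not_le.2 hva2)
    have huim : u.im < 0 := Complex.arg_neg_iff.1 (by linarith)
    have him : (u * v).im < 0 := h2 huim.le hvim
    have ha1 : (u * v).arg < 0 := Complex.arg_neg_iff.2 him
    have ha2 : -π < (u * v).arg := Complex.neg_pi_lt_arg _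
    have hk0 : (0:ℝ) < 2 * π * k := by linarith
    have hk1 : 2 * π * (k:ℝ) < 2 * π * 1 := by linarith
    have hk0' : (0:ℤ) < k := by
      by_contra hkk
      push_neg at hkk
      have hx : (k:ℝ) ≤ 0 := by exact_mod_cast hkk
      nlinarith
    have hk1' : (k:ℤ) < 1 := by
      by_contra hkk
      push_neg at hkk
      have hx : (1:ℝ) ≤ (k:ℝ) := by exact_mod_cast hkk
      nlinarith
    omega
  · by_contra hc
    push_neg at hc
    have hva2 : 0 < v.arg := by linarith
    have huarg : 0 < u.arg := by linarith
    have huim : 0 ≤ u.im := Complex.arg_nonneg_iff.1 huarg.le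
    have hvim : 0 < v.im := im_pos_of_arg_pos hv hva2
    have him : 0 < (u * v).im := h1 huim hvim
    have ha1 : 0 < (u * v).arg := arg_pos_of_im_pos him
    have ha2 : (u * v).arg ≤ π := Complex.arg_le_pi _
    have hk0 : 2 * π * (k:ℝ) < 0 := by linarith
    have hk1 : 2 * π * (-1:ℝ) < 2 * π * k := by linarith
    have hk0' : k < (0:ℤ) := by
      by_contra hkk
      push_neg at hkk
      have hx : (0:ℝ) ≤ (k:ℝ) := by exact_mod_cast hkk
      nlinarith
    have hk1' : (-1:ℤ) < k := by
      by_contra hkk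
      push_neg at hkk
      have hx : (k:ℝ) ≤ -1 := by exact_mod_cast hkk
      nlinarith
    omega

lemma log_mul_pos_re {u v : ℂ} (hu : 0 < u.re) (hv : 0 < v.re) :
    Complex.log (u * v) = Complex.log u + Complex.log v := by
  have hu0 : u ≠ 0 := fun h => by simp [h] at hu
  have hv0 : v ≠ 0 := fun h => by simp [h] at hv
  have hua := abs_lt.1 (Complex.abs_arg_lt_pi_div_two_iff.2 (Or.inl hu))
  have hva := abs_lt.1 (Complex.abs_arg_lt_pi_div_two_iff.2 (Or.inl hv))
  have hπ := Real.pi_pos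
  rw [Complex.log_mul_eq_add_log_iff hu0 hv0]
  constructor
  · linarith [hua.1, hva.1]
  · linarith [hua.2, hva.2]

set_option maxHeartbeats 4000000 in
lemma core (t s : ℂ) {z : ℂ} (hz : (100:ℝ) ≤ ‖z‖) :
    ∃ E : ℂ,
      zsqSub4Pow z t * joukowski (z / 2) ^ s
        = Complex.exp (Complex.log z * (2 * t + s) + E) ∧
      ‖E‖ ≤ (6 * ‖t‖ + 3 * ‖s‖) / ‖z‖ := by
  have hπ := Real.pi_pos
  have hr0 : (0:ℝ) < ‖z‖ := by linarith
  have hz0 : z ≠ 0 := by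
    intro h
    rw [h] at hz
    simp at hz
    linarith
  have hnsq : 0 < Complex.normSq z := Complex.normSq_pos.2 hz0
  have hnsq2 : 0 < Complex.normSq (z ^ 2) := Complex.normSq_pos.2 (pow_ne_zero 2 hz0)
  -- abs facts
  have habs2 : ‖2 / z‖ = 2 / ‖z‖ := by
    rw [norm_div, Complex.norm_two]
  have habs1 : ‖1 / z‖ = 1 / ‖z‖ := by
    rw [norm_div, norm_one]
  have habsq : ‖1 / z ^ 2‖ = 1 / (‖z‖) ^ 2 := by
    rw [norm_div, norm_one, norm_pow]
  have h2small : 2 / ‖z‖ ≤ 1 / 50 := by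
    rw [div_le_div_iff₀ hr0 (by norm_num)]; linarith
  have h1small : 1 / ‖z‖ ≤ 1 / 100 := by
    rw [div_le_div_iff₀ hr0 (by norm_num)]; linarith
  have hqsmall : 1 / (‖z‖) ^ 2 ≤ 1 / 10000 := by
    rw [div_le_div_iff₀ (by positivity) (by norm_num)]; nlinarith
  -- real part bounds
  have hrebd : ∀ w : ℂ, |w.re| ≤ ‖w‖ := fun w => Complex.abs_re_le_norm w
  have hre2z : |(2 / z).re| ≤ 1 / 50 := by
    refine (hrebd _).trans ?_; rw [habs2]; exact h2small
  have hre1z : |(1 / z).re| ≤ 1 / 100 := by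
    refine (hrebd _).trans ?_; rw [habs1]; exact h1small
  have hreq : |(1 / z ^ 2).re| ≤ 1 / 10000 := by
    refine (hrebd _).trans ?_; rw [habsq]; exact hqsmall
  rw [abs_le] at hre2z hre1z hreq
  have hv₁ : (0:ℝ) < (1 - 2 / z).re := by
    rw [Complex.sub_re, Complex.one_re]; linarith [hre2z.2]
  have hv₂ : (0:ℝ) < (1 + 2 / z).re := by
    rw [Complex.add_re, Complex.one_re]; linarith [hre2z.1]
  have hv₃ : (0:ℝ) < ((1:ℂ) / 2 - 1 / z).re := by
    rw [Complex.sub_re]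
    have : ((1:ℂ)/2).re = 1/2 := by norm_num
    rw [this]; linarith [hre1z.2]
  have hv₄ : (0:ℝ) < ((1:ℂ) / 2 + 1 / z).re := by
    rw [Complex.add_re]
    have : ((1:ℂ)/2).re = 1/2 := by norm_num
    rw [this]; linarith [hre1z.1]
  have hx_re : (0:ℝ) < ((1:ℂ) / 4 - 1 / z ^ 2).re := by
    rw [Complex.sub_re]
    have : ((1:ℂ)/4).re = 1/4 := by norm_num
    rw [this]; linarith [hreq.2]
  have hv₁0 : (1:ℂ) - 2 / z ≠ 0 := fun h => by rw [h] at hv₁; simp at hv₁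
  have hv₂0 : (1:ℂ) + 2 / z ≠ 0 := fun h => by rw [h] at hv₂; simp at hv₂
  have hv₃0 : (1:ℂ) / 2 - 1 / z ≠ 0 := fun h => by rw [h] at hv₃; simp at hv₃
  have hv₄0 : (1:ℂ) / 2 + 1 / z ≠ 0 := fun h => by rw [h] at hv₄; simp at hv₄
  have hx0 : (1:ℂ) / 4 - 1 / z ^ 2 ≠ 0 := fun h => by rw [h] at hx_re; simp at hx_re
  -- imaginary parts
  have him2z : (2 / z).im = -(2 * z.im) / Complex.normSq z := by
    rw [div_eq_mul_inv]
    simp [Complex.mul_im, Complex.inv_im, Complex.inv_re]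
    ring
  have him1z : (1 / z).im = -z.im / Complex.normSq z := by
    rw [one_div, Complex.inv_im]
  have himsq : (z ^ 2).im = 2 * z.re * z.im := by
    rw [sq]; simp [Complex.mul_im]; ring
  have himq : (1 / z ^ 2).im = -(2 * z.re * z.im) / Complex.normSq (z ^ 2) := by
    rw [one_div, Complex.inv_im, himsq]
  -- products
  have hp₁ : z * (1 - 2 / z) = z - 2 := by field_simp
  have hp₂ : z * (1 + 2 / z) = z + 2 := by field_simp
  have hp₃ : z * ((1:ℂ) / 2 - 1 / z) = z / 2 - 1 := by field_simp
  have hp₄ : z * ((1:ℂ) / 2 + 1 / z) = z / 2 + 1 := by field_simp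
  have hp₅ : ((1:ℂ) / 2 - 1 / z) * ((1:ℂ) / 2 + 1 / z) = 1 / 4 - 1 / z ^ 2 := by
    field_simp; ring
  -- logs
  have hlog₁ : Complex.log (z - 2) = Complex.log z + Complex.log (1 - 2 / z) := by
    rw [← hp₁]
    refine log_mul_aux hz0 hv₁ ?_ ?_
    · intro hzi hvi
      have himv : (1 - 2 / z).im = 2 * z.im / Complex.normSq z := by
        rw [Complex.sub_im, Complex.one_im, him2z]; ring
      rw [himv] at hvi
      have : (0:ℝ) < 2 * z.im := pos_of_div_pos hnsq hvi
      have hgoal : (z * (1 - 2 / z)).im = z.im := by rw [hp₁]; simp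
      rw [hgoal]; linarith
    · intro hzi hvi
      have himv : (1 - 2 / z).im = 2 * z.im / Complex.normSq z := by
        rw [Complex.sub_im, Complex.one_im, him2z]; ring
      rw [himv] at hvi
      have : 2 * z.im < 0 := neg_of_div_neg hnsq hvi
      have hgoal : (z * (1 - 2 / z)).im = z.im := by rw [hp₁]; simp
      rw [hgoal]; linarith
  have hlog₂ : Complex.log (z + 2) = Complex.log z + Complex.log (1 + 2 / z) := by
    rw [← hp₂]
    refine log_mul_aux hz0 hv₂ ?_ ?_
    · intro hzi hvi
      have himv : (1 + 2 / z).im = -(2 * z.im) / Complex.normSq z := by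
        rw [Complex.add_im, Complex.one_im, him2z]; ring
      rw [himv] at hvi
      have : (0:ℝ) < -(2 * z.im) := pos_of_div_pos hnsq hvi
      linarith
    · intro hzi hvi
      have himv : (1 + 2 / z).im = -(2 * z.im) / Complex.normSq z := by
        rw [Complex.add_im, Complex.one_im, him2z]; ring
      rw [himv] at hvi
      have : -(2 * z.im) < 0 := neg_of_div_neg hnsq hvi
      linarith
  have hlog₃ : Complex.log (z / 2 - 1)
      = Complex.log z + Complex.log ((1:ℂ) / 2 - 1 / z) := by
    rw [← hp₃]
    refine log_mul_aux hz0 hv₃ ?_ ?_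
    · intro hzi hvi
      have himv : ((1:ℂ) / 2 - 1 / z).im = z.im / Complex.normSq z := by
        rw [Complex.sub_im, him1z]
        have h12 : ((1:ℂ)/2).im = 0 := by norm_num
        rw [h12]; ring
      rw [himv] at hvi
      have : (0:ℝ) < z.im := pos_of_div_pos hnsq hvi
      have hgoal : (z * ((1:ℂ) / 2 - 1 / z)).im = z.im / 2 := by rw [hp₃]; simp
      rw [hgoal]; linarith
    · intro hzi hvi
      have himv : ((1:ℂ) / 2 - 1 / z).im = z.im / Complex.normSq z := by
        rw [Complex.sub_im, him1z]
        have h12 : ((1:ℂ)/2).im = 0 := by norm_num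
        rw [h12]; ring
      rw [himv] at hvi
      have : z.im < 0 := neg_of_div_neg hnsq hvi
      have hgoal : (z * ((1:ℂ) / 2 - 1 / z)).im = z.im / 2 := by rw [hp₃]; simp
      rw [hgoal]; linarith
  have hlog₄ : Complex.log (z / 2 + 1)
      = Complex.log z + Complex.log ((1:ℂ) / 2 + 1 / z) := by
    rw [← hp₄]
    refine log_mul_aux hz0 hv₄ ?_ ?_
    · intro hzi hvi
      have himv : ((1:ℂ) / 2 + 1 / z).im = -z.im / Complex.normSq z := by
        rw [Complex.add_im, him1z]
        norm_num
      rw [himv] at hvi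
      have : (0:ℝ) < -z.im := pos_of_div_pos hnsq hvi
      linarith
    · intro hzi hvi
      have himv : ((1:ℂ) / 2 + 1 / z).im = -z.im / Complex.normSq z := by
        rw [Complex.add_im, him1z]
        norm_num
      rw [himv] at hvi
      have : -z.im < 0 := neg_of_div_neg hnsq hvi
      linarith
  have hlog₅ : Complex.log ((1:ℂ) / 4 - 1 / z ^ 2)
      = Complex.log ((1:ℂ) / 2 - 1 / z) + Complex.log ((1:ℂ) / 2 + 1 / z) := by
    rw [← hp₅]
    exact log_mul_pos_re hv₃ hv₄
  -- the square root sigma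
  have hhalf : ((1:ℂ) / 2) = (((1:ℝ) / 2 : ℝ) : ℂ) := by norm_num
  have hhim : ∀ w : ℂ, (w * ((1:ℂ) / 2)).im = w.im / 2 := by
    intro w
    rw [hhalf, Complex.mul_im]
    simp [Complex.ofReal_re, Complex.ofReal_im]
    ring
  set x : ℂ := (1:ℂ) / 4 - 1 / z ^ 2 with hxdef
  set σ : ℂ := x ^ ((1:ℂ) / 2) with hσ
  set a : ℝ := x.arg with hadef
  set q : ℝ := Real.exp ((Complex.log x * ((1:ℂ) / 2)).re) with hqdef
  have hq : 0 < q := Real.exp_pos _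
  have hσdef : σ = Complex.exp (Complex.log x * ((1:ℂ) / 2)) :=
    Complex.cpow_def_of_ne_zero hx0 _
  have hargx := abs_lt.1 (Complex.abs_arg_lt_pi_div_two_iff.2 (Or.inl hx_re))
  have hσre' : σ.re = q * Real.cos (a / 2) := by
    rw [hσdef, Complex.exp_re, hhim, Complex.log_im]
  have hσim' : σ.im = q * Real.sin (a / 2) := by
    rw [hσdef, Complex.exp_im, hhim, Complex.log_im]
  have hσre : 0 < σ.re := by
    rw [hσre']
    refine mul_pos hq (Real.cos_pos_of_mem_Ioo ?_)
    rw [Set.mem_Ioo]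
    constructor
    · linarith [hargx.1]
    · linarith [hargx.2]
  have hσim_pos : 0 < σ.im → 0 < x.im := by
    intro h
    rw [hσim'] at h
    have hsin : 0 < Real.sin (a / 2) := by
      by_contra hcon
      push_neg at hcon
      have h2 := mul_le_mul_of_nonneg_left hcon hq.le
      rw [mul_zero] at h2
      linarith
    have harg : 0 < a := by
      by_contra hcon
      push_neg at hcon
      have : Real.sin (a / 2) ≤ 0 :=
        Real.sin_nonpos_of_nonpos_of_neg_pi_le (by linarith) (by linarith [hargx.1])
      linarith
    exact im_pos_of_arg_pos hx_re harg
  have hσim_neg : σ.im < 0 → x.im < 0 := by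
    intro h
    rw [hσim'] at h
    have hsin : Real.sin (a / 2) < 0 := by
      by_contra hcon
      push_neg at hcon
      have h2 := mul_le_mul_of_nonneg_left hcon hq.le
      rw [mul_zero] at h2
      linarith
    have harg : a < 0 := by
      by_contra hcon
      push_neg at hcon
      have : 0 ≤ Real.sin (a / 2) :=
        Real.sin_nonneg_of_nonneg_of_le_pi (by linarith) (by linarith [hargx.2])
      linarith
    exact Complex.arg_neg_iff.1 harg
  have hσsq : σ * σ = x := by
    rw [hσdef, ← Complex.exp_add]
    have hex : Complex.log x * ((1:ℂ) / 2) + Complex.log x * ((1:ℂ) / 2)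
        = Complex.log x := by ring
    rw [hex, Complex.exp_log hx0]
  have hσbd : ‖σ - 1 / 2‖ ≤ 2 / (‖z‖) ^ 2 := by
    have hkey : (σ - 1 / 2) * (σ + 1 / 2) = (-1) * (1 / z ^ 2) := by
      rw [hxdef] at hσsq
      linear_combination hσsq
    have habsk : ‖σ - 1 / 2‖ * ‖σ + 1 / 2‖
        = 1 / (‖z‖) ^ 2 := by
      rw [← norm_mul, hkey, norm_mul, ← habsq]
      simp
    have hre2 : (1:ℝ) / 2 ≤ ‖σ + 1 / 2‖ := by
      refine le_trans ?_ (Complex.re_le_norm (σ + 1 / 2))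
      have hre3 : (σ + 1 / 2).re = σ.re + 1 / 2 := by
        rw [Complex.add_re]
        norm_num
      rw [hre3]; linarith
    have hA := norm_nonneg (σ - 1 / 2)
    have h2 : ‖σ - 1 / 2‖ * (1 / 2)
        ≤ ‖σ - 1 / 2‖ * ‖σ + 1 / 2‖ :=
      mul_le_mul_of_nonneg_left hre2 hA
    rw [habsk] at h2
    calc ‖σ - 1 / 2‖ = ‖σ - 1 / 2‖ * (1 / 2) * 2 := by ring
      _ ≤ 1 / (‖z‖) ^ 2 * 2 := by linarith
      _ = 2 / (‖z‖) ^ 2 := by ring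
  -- psi
  have hψre : 0 < ((1:ℂ) / 2 + σ).re := by
    rw [Complex.add_re]
    have h12 : ((1:ℂ)/2).re = 1/2 := by norm_num
    rw [h12]
    linarith
  have hψ0 : (1:ℂ) / 2 + σ ≠ 0 := fun h => by rw [h] at hψre; simp at hψre
  have hψim : ((1:ℂ) / 2 + σ).im = σ.im := by
    rw [Complex.add_im]
    have h12 : ((1:ℂ)/2).im = 0 := by norm_num
    rw [h12]; ring
  -- joukowski identity
  have hz31 : z / 2 - 1 ≠ 0 := by rw [← hp₃]; exact mul_ne_zero hz0 hv₃0
  have hz41 : z / 2 + 1 ≠ 0 := by rw [← hp₄]; exact mul_ne_zero hz0 hv₄0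
  have hjouk : joukowski (z / 2) = z * ((1:ℂ) / 2 + σ) := by
    unfold joukowski
    rw [Complex.cpow_def_of_ne_zero hz31, Complex.cpow_def_of_ne_zero hz41,
      ← Complex.exp_add]
    have hex : Complex.log (z / 2 - 1) * ((1:ℂ) / 2)
        + Complex.log (z / 2 + 1) * ((1:ℂ) / 2)
        = Complex.log z + Complex.log x * ((1:ℂ) / 2) := by
      rw [hlog₃, hlog₄, hlog₅]
      ring
    rw [hex, Complex.exp_add, Complex.exp_log hz0, ← hσdef]
    ring
  have hjouk0 : joukowski (z / 2) ≠ 0 := by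
    rw [hjouk]; exact mul_ne_zero hz0 hψ0
  have himx2 : x.im = 2 * z.re * z.im / Complex.normSq (z ^ 2) := by
    rw [hxdef, Complex.sub_im, himq]
    have h14 : ((1:ℂ)/4).im = 0 := by norm_num
    rw [h14]; ring
  have hlogjouk : Complex.log (joukowski (z / 2))
      = Complex.log z + Complex.log ((1:ℂ) / 2 + σ) := by
    rw [hjouk]
    refine log_mul_aux hz0 hψre ?_ ?_
    · intro hzi hvi
      rw [hψim] at hvi
      have hxi : 0 < x.im := hσim_pos hvi
      rw [himx2] at hxi
      have hprod : 0 < 2 * z.re * z.im := pos_of_div_pos hnsq2 hxi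
      have hzim : 0 < z.im := by
        rcases hzi.lt_or_eq with h | h
        · exact h
        · exfalso; rw [← h, mul_zero] at hprod; exact lt_irrefl 0 hprod
      have hzre : 0 < z.re := by
        by_contra h
        push_neg at h
        have h2 : 0 ≤ -z.re * z.im := mul_nonneg (by linarith) hzim.le
        nlinarith
      rw [Complex.mul_im, hψim]
      have h1 : 0 < z.re * σ.im := mul_pos hzre hvi
      have h2 : 0 < z.im * ((1:ℂ) / 2 + σ).re := mul_pos hzim hψre
      linarith
    · intro hzi hvi
      rw [hψim] at hvi
      have hxi : x.im < 0 := hσim_neg hvi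
      rw [himx2] at hxi
      have hprod : 2 * z.re * z.im < 0 := neg_of_div_neg hnsq2 hxi
      have hzim : z.im < 0 := by
        rcases hzi.lt_or_eq with h | h
        · exact h
        · exfalso; rw [h, mul_zero] at hprod; exact lt_irrefl 0 hprod
      have hzre : 0 < z.re := by
        by_contra h
        push_neg at h
        have h2 : 0 ≤ -z.re * -z.im := mul_nonneg (by linarith) (by linarith)
        nlinarith
      rw [Complex.mul_im, hψim]
      have h1 : z.re * σ.im < 0 := mul_neg_of_pos_of_neg hzre hvi
      have h2 : z.im * ((1:ℂ) / 2 + σ).re < 0 := mul_neg_of_neg_of_pos hzim hψre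
      linarith
  -- norm bounds on the three logs
  have hnormeq : ∀ w : ℂ, ‖w‖ = ‖w‖ := fun w => rfl
  have hlogbd₁ : ‖Complex.log (1 - 2 / z)‖ ≤ 3 / ‖z‖ := by
    have he : (1:ℂ) - 2 / z = 1 + -(2 / z) := by ring
    rw [he]
    have hn : ‖-(2 / z)‖ ≤ 1 / 2 := by
      rw [norm_neg, hnormeq, habs2]
      linarith
    refine (Complex.norm_log_one_add_half_le_self hn).trans ?_
    rw [norm_neg, hnormeq, habs2]
    refine le_of_eq ?_
    ring
  have hlogbd₂ : ‖Complex.log (1 + 2 / z)‖ ≤ 3 / ‖z‖ := by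
    have hn : ‖(2 / z : ℂ)‖ ≤ 1 / 2 := by
      rw [hnormeq, habs2]
      linarith
    refine (Complex.norm_log_one_add_half_le_self hn).trans ?_
    rw [hnormeq, habs2]
    refine le_of_eq ?_
    ring
  have hlogbd₃ : ‖Complex.log ((1:ℂ) / 2 + σ)‖ ≤ 3 / ‖z‖ := by
    have he : (1:ℂ) / 2 + σ = 1 + (σ - 1 / 2) := by ring
    rw [he]
    have hb2 : 2 / (‖z‖) ^ 2 ≤ 2 / (100 * ‖z‖) := by
      rw [div_le_div_iff₀ (by positivity) (by positivity)]
      nlinarith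
    have hn : ‖σ - 1 / 2‖ ≤ 1 / 2 := by
      rw [hnormeq]
      refine hσbd.trans (hb2.trans ?_)
      rw [div_le_div_iff₀ (by positivity) (by norm_num)]
      linarith
    refine (Complex.norm_log_one_add_half_le_self hn).trans ?_
    rw [hnormeq]
    refine le_trans (by linarith [hσbd, hb2] :
      (3:ℝ) / 2 * ‖σ - 1 / 2‖ ≤ 3 / 2 * (2 / (100 * ‖z‖))) ?_
    have he2 : (3:ℝ) / 2 * (2 / (100 * ‖z‖)) = 3 / (100 * ‖z‖) := by
      ring
    rw [he2, div_le_div_iff₀ (by positivity) hr0]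
    linarith
  -- assembly
  clear_value q a σ x
  refine ⟨Complex.log (1 - 2 / z) * t + Complex.log (1 + 2 / z) * t
      + Complex.log ((1:ℂ) / 2 + σ) * s, ?_, ?_⟩
  · have hz2 : z - 2 ≠ 0 := by rw [← hp₁]; exact mul_ne_zero hz0 hv₁0
    have hz2' : z + 2 ≠ 0 := by rw [← hp₂]; exact mul_ne_zero hz0 hv₂0
    unfold zsqSub4Pow
    rw [Complex.cpow_def_of_ne_zero hz2 t, Complex.cpow_def_of_ne_zero hz2' t,
      Complex.cpow_def_of_ne_zero hjouk0 s, ← Complex.exp_add, ← Complex.exp_add]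
    congr 1
    rw [hlog₁, hlog₂, hlogjouk]
    ring
  · refine le_trans (norm_add_le _ _) ?_
    refine le_trans (add_le_add_left (norm_add_le _ _) _) ?_
    rw [norm_mul, norm_mul, norm_mul]
    have h1 : ‖Complex.log (1 - 2 / z)‖ * ‖t‖ ≤ 3 / ‖z‖ * ‖t‖ :=
      mul_le_mul_of_nonneg_right hlogbd₁ (norm_nonneg t)
    have h2 : ‖Complex.log (1 + 2 / z)‖ * ‖t‖ ≤ 3 / ‖z‖ * ‖t‖ :=
      mul_le_mul_of_nonneg_right hlogbd₂ (norm_nonneg t)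
    have h3 : ‖Complex.log ((1:ℂ) / 2 + σ)‖ * ‖s‖ ≤ 3 / ‖z‖ * ‖s‖ :=
      mul_le_mul_of_nonneg_right hlogbd₃ (norm_nonneg s)
    have heq : 3 / ‖z‖ * ‖t‖ + 3 / ‖z‖ * ‖t‖
        + 3 / ‖z‖ * ‖s‖ = (6 * ‖t‖ + 3 * ‖s‖) / ‖z‖ := by
      ring
    linarith


lemma ev_ge (R : ℝ) : ∀ᶠ z : ℂ in Bornology.cobounded ℂ, R ≤ ‖z‖ :=
  eventually_cobounded_le_norm R

lemma diag_bigO (t s : ℂ) (h : 2 * t + s = 0) :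
    (fun z : ℂ => zsqSub4Pow z t * joukowski (z / 2) ^ s - 1)
      =O[Bornology.cobounded ℂ] fun z : ℂ => 1 / z := by
  rw [Asymptotics.isBigO_iff]
  refine ⟨2 * (6 * ‖t‖ + 3 * ‖s‖), ?_⟩
  filter_upwards [ev_ge (max 100 (6 * ‖t‖ + 3 * ‖s‖))] with z hz
  have hz1 : (100:ℝ) ≤ ‖z‖ := le_trans (le_max_left _ _) hz
  have hz2 : 6 * ‖t‖ + 3 * ‖s‖ ≤ ‖z‖ := le_trans (le_max_right _ _) hz
  have hr0 : (0:ℝ) < ‖z‖ := by linarith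
  have hz0 : z ≠ 0 := by
    intro hzz; rw [hzz] at hz1; simp at hz1; linarith
  obtain ⟨E, hE, hEn⟩ := core t s hz1
  rw [hE, h, mul_zero, zero_add]
  have hE1 : ‖E‖ ≤ 1 := by
    refine le_trans hEn ?_
    rw [div_le_one hr0]
    exact hz2
  have hbd := Complex.norm_exp_sub_one_le hE1
  have hnorm1z : ‖(1:ℂ) / z‖ = 1 / ‖z‖ := by
    rw [norm_div, norm_one]
  rw [hnorm1z]
  refine le_trans hbd ?_
  have : 2 * ‖E‖ ≤ 2 * ((6 * ‖t‖ + 3 * ‖s‖) / ‖z‖) := by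
    linarith
  refine le_trans this (le_of_eq ?_)
  ring

lemma off_bigO (c t s : ℂ) (h : 2 * t + s = -1) :
    (fun z : ℂ => c * zsqSub4Pow z t * joukowski (z / 2) ^ s - 0)
      =O[Bornology.cobounded ℂ] fun z : ℂ => 1 / z := by
  rw [Asymptotics.isBigO_iff]
  refine ⟨‖c‖ * 3, ?_⟩
  filter_upwards [ev_ge (max 100 (6 * ‖t‖ + 3 * ‖s‖))] with z hz
  have hz1 : (100:ℝ) ≤ ‖z‖ := le_trans (le_max_left _ _) hz
  have hz2 : 6 * ‖t‖ + 3 * ‖s‖ ≤ ‖z‖ := le_trans (le_max_right _ _) hz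
  have hr0 : (0:ℝ) < ‖z‖ := by linarith
  have hz0 : z ≠ 0 := by
    intro hzz; rw [hzz] at hz1; simp at hz1; linarith
  obtain ⟨E, hE, hEn⟩ := core t s hz1
  have hE1 : ‖E‖ ≤ 1 := by
    refine le_trans hEn ?_
    rw [div_le_one hr0]
    exact hz2
  have hfz : c * zsqSub4Pow z t * joukowski (z / 2) ^ s
      = c * z⁻¹ * Complex.exp E := by
    rw [mul_assoc, hE, h]
    have hexp : Complex.exp (Complex.log z * (-1) + E)
        = z⁻¹ * Complex.exp E := by
      rw [Complex.exp_add]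
      congr 1
      rw [mul_neg_one, Complex.exp_neg, Complex.exp_log hz0]
    rw [hexp]
    ring
  rw [sub_zero, hfz]
  have habsexp : ‖Complex.exp E‖ ≤ 3 := by
    rw [Complex.norm_exp]
    have hre : E.re ≤ 1 := le_trans (Complex.re_le_norm E) hE1
    refine le_trans (Real.exp_le_exp.2 hre) ?_
    have := Real.exp_one_lt_d9
    linarith
  have hnorm1z : ‖(1:ℂ) / z‖ = 1 / ‖z‖ := by
    rw [norm_div, norm_one]
  rw [hnorm1z, norm_mul, norm_mul, norm_inv]
  calc ‖c‖ * (‖z‖)⁻¹ * ‖Complex.exp E‖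
      ≤ ‖c‖ * (‖z‖)⁻¹ * 3 := by
        refine mul_le_mul_of_nonneg_left habsexp ?_
        positivity
    _ = ‖c‖ * 3 * (1 / ‖z‖) := by ring

end NmatAux

open NmatAux in
/-- `N(z) = I + O(1/z)` as `z → ∞`: each entry of `N(z) − I` is `O(1/z)` at infinity. -/
theorem Nmat_eq_id_add_bigO (α : ℝ) (hα : 0 < α) (L : ℂ) :
    ∀ i j : Fin 2,
      (fun z : ℂ => Nmat α L z i j - (1 : Matrix (Fin 2) (Fin 2) ℂ) i j)
        =O[Bornology.cobounded ℂ] (fun z : ℂ => 1 / z) := by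
  intro i j
  fin_cases i <;> fin_cases j
  · simpa [Nmat, Matrix.one_apply] using
      diag_bigO ((1:ℂ) / 4 - (α:ℂ)) ((2:ℂ) * (α:ℂ) - 1 / 2) (by ring)
  · simpa [Nmat, Matrix.one_apply] using
      off_bigO (-Complex.I * Complex.exp L) ((α:ℂ) - 3 / 4) ((1:ℂ) / 2 - 2 * (α:ℂ)) (by ring)
  · simpa [Nmat, Matrix.one_apply] using
      off_bigO (Complex.I * Complex.exp (-L)) ((1:ℂ) / 4 - (α:ℂ)) ((2:ℂ) * (α:ℂ) - 3 / 2)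
        (by ring)
  · simpa [Nmat, Matrix.one_apply] using
      diag_bigO ((α:ℂ) - 3 / 4) ((3:ℂ) / 2 - 2 * (α:ℂ)) (by ring)
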